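/- Let V be a finite-dimensional real inner product space, H a complex Hilbert space, 𝒜 = B(H), and T : V → V a linear map. Let Ξ : L²(ℝ; V) → 𝒜 be a continuous ℝ-linear map with Ξ(f)Ξ(g) = −Ξ(g)Ξ(f) for all f, g ∈ L²(ℝ; V), and let Ψ₀ : V → 𝒜 be a continuous linear map with Ψ₀(v)Ψ₀(w) = −Ψ₀(w)Ψ₀(v) and Ψ₀(v)Ξ(f) = −Ξ(f)Ψ₀(v) for all v, w ∈ V and f ∈ L²(ℝ; V). For t ≥ 0 set B_t(v) := Ξ(s ↦ 1_{[0,t]}(s)·v) and define Ψ_t(v) := Ψ₀(e^{tT} v) + Ξ(s ↦ 1_{[0,t]}(s)·e^{(t−s)T} v), where e^{sT} denotes the exponential of T in the endomorphisms of V. Then: (a) for each t ≥ 0, Ψ_t(v)² = 0 for all v ∈ V, so Ψ_t extends to an algebra homomorphism ΛV → 𝒜; (b) t ↦ Ψ_t is continuous in operator norm; (c) Ψ_t(v) = Ψ₀(v) + ∫₀ᵗ Ψ_s(T v) ds + B_t(v) for all t ≥ 0 and v ∈ V; and (d) Ψ is the unique continuous map from [0, ∞) to the continuous linear maps V → 𝒜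 satisfying the integral equation in (c). -/

import Mathlib

open MeasureTheory Set Filter Topology NormedSpace
set_option maxHeartbeats 1000000
set_option synthInstance.maxHeartbeats 100000
open scoped ENNReal NNReal

namespace GOU
section Master
section Master
variable {V : Type*} [NormedAddCommGroup V]

lemma rpow_two_eq_pow (x : ℝ≥0∞) : x ^ (2:ℝ) = x ^ (2:ℕ) := by
  rw [← ENNReal.rpow_natCast x 2]; norm_num

lemma lintegral_sq_lt_top {bound : ℝ → ℝ} (hbmem : MemLp bound 2 (volume : Measure ℝ)) :
    ∫⁻ u, (‖bound u‖₊ : ℝ≥0∞) ^ (2 : ℕ) ∂(volume : Measure ℝ) ≠ ∞ := by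
  have h := lintegral_rpow_enorm_lt_top_of_eLpNorm_lt_top (p := 2) (by norm_num) (by norm_num)
      hbmem.eLpNorm_lt_top
  have h2 : (2 : ℝ≥0∞).toReal = (2 : ℝ) := by norm_num
  rw [h2] at h
  rw [lintegral_congr fun u => (rpow_two_eq_pow _).symm]
  exact h.ne

lemma tendsto_toLp_of_dominated {ι : Type*} {l : Filter ι} [l.IsCountablyGenerated] [l.NeBot]
    {Fn : ι → ℝ → V} {G : ℝ → V} {bound : ℝ → ℝ}
    (hFs : ∀ i, StronglyMeasurable (Fn i)) (hGs : StronglyMeasurable G)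
    (hFmem : ∀ i, MemLp (Fn i) 2 (volume : Measure ℝ))
    (hGmem : MemLp G 2 (volume : Measure ℝ))
    (hbmem : MemLp bound 2 (volume : Measure ℝ))
    (hb : ∀ᶠ i in l, ∀ u, ‖Fn i u‖ ≤ bound u)
    (hlim : ∀ᵐ u ∂(volume : Measure ℝ), Tendsto (fun i => Fn i u) l (𝓝 (G u))) :
    Tendsto (fun i => (hFmem i).toLp (Fn i)) l (𝓝 (hGmem.toLp G)) := by
  rw [MeasureTheory.Lp.tendsto_Lp_iff_tendsto_eLpNorm'']
  have hGb : ∀ᵐ u ∂(volume : Measure ℝ), ‖G u‖ ≤ bound u := by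
    filter_upwards [hlim] with u hu
    refine le_of_tendsto hu.norm ?_
    filter_upwards [hb] with i hi using hi u
  have key : Tendsto
      (fun i => ∫⁻ u, (‖Fn i u - G u‖₊ : ℝ≥0∞) ^ (2:ℕ) ∂(volume : Measure ℝ)) l (𝓝 0) := by
    have h0 : (0 : ℝ≥0∞) = ∫⁻ (_ : ℝ), (0:ℝ≥0∞) ∂(volume : Measure ℝ) := by simp
    rw [h0]
    refine tendsto_lintegral_filter_of_dominated_convergence
      (fun u => ((2 : ℝ≥0∞) * (‖bound u‖₊ : ℝ≥0∞)) ^ (2 : ℕ)) ?_ ?_ ?_ ?_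
    · exact Eventually.of_forall fun i =>
        (((hFs i).sub hGs).enorm).pow_const _
    · filter_upwards [hb] with i hi
      filter_upwards [hGb] with u hGu
      have hb0 : 0 ≤ bound u := le_trans (norm_nonneg _) (hi u)
      have h1 : (‖Fn i u - G u‖₊ : ℝ≥0∞) ≤ 2 * (‖bound u‖₊ : ℝ≥0∞) := by
        have hx : ‖Fn i u - G u‖ ≤ 2 * ‖bound u‖ := by
          rw [Real.norm_of_nonneg hb0]
          have := norm_sub_le (Fn i u) (G u)
          have h2 := hi u
          linarith
        rw [show (2 : ℝ≥0∞) * (‖bound u‖₊ : ℝ≥0∞) = ((2 * ‖bound u‖₊ : ℝ≥0) : ℝ≥0∞) by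
          push_cast; ring]
        rw [ENNReal.coe_le_coe, ← NNReal.coe_le_coe]
        push_cast
        simpa using hx
      exact pow_le_pow_left' h1 2
    · have h4 : ∀ u : ℝ, ((2 : ℝ≥0∞) * (‖bound u‖₊ : ℝ≥0∞)) ^ (2:ℕ)
          = 4 * (‖bound u‖₊ : ℝ≥0∞) ^ (2:ℕ) := by
        intro u; rw [mul_pow]; norm_num
      rw [lintegral_congr h4, lintegral_const_mul' _ _ (by norm_num)]
      exact ENNReal.mul_ne_top (by norm_num) (lintegral_sq_lt_top hbmem)
    · filter_upwards [hlim] with u hu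
      have h5 : Tendsto (fun i => Fn i u - G u) l (𝓝 0) := by
        simpa using hu.sub_const (G u)
      have h6 : Tendsto (fun i => (‖Fn i u - G u‖₊ : ℝ≥0∞)) l (𝓝 0) := by
        simpa using (ENNReal.tendsto_coe.mpr h5.nnnorm)
      have := ((ENNReal.continuous_pow 2).tendsto 0).comp h6
      rw [zero_pow two_ne_zero] at this; exact this
  rw [ENNReal.tendsto_nhds_zero]
  intro ε hε
  have hε2 : (0:ℝ≥0∞) < ε ^ (2:ℕ) := ENNReal.pow_pos hε.bot_lt 2
  filter_upwards [(ENNReal.tendsto_nhds_zero.mp key) (ε ^ (2:ℕ)) hε2] with i hi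
  have hform : eLpNorm (Fn i - G) 2 volume
      = (∫⁻ u, (‖Fn i u - G u‖₊ : ℝ≥0∞) ^ (2:ℕ) ∂(volume : Measure ℝ)) ^ (1/2 : ℝ) := by
    rw [eLpNorm_eq_lintegral_rpow_enorm_toReal (by norm_num) (by norm_num)]
    have h2 : (2 : ℝ≥0∞).toReal = (2 : ℝ) := by norm_num
    rw [h2]
    congr 1
    exact lintegral_congr fun u => by simp only [Pi.sub_apply]; exact rpow_two_eq_pow _
  rw [hform]
  calc (∫⁻ u, (‖Fn i u - G u‖₊ : ℝ≥0∞) ^ (2:ℕ) ∂(volume : Measure ℝ)) ^ (1/2 : ℝ)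
      ≤ (ε ^ (2:ℕ)) ^ (1/2 : ℝ) := ENNReal.rpow_le_rpow hi (by norm_num)
    _ = ε := by
        rw [← ENNReal.rpow_natCast, ← ENNReal.rpow_mul]
        norm_num
end Master
end Master

section Proc
variable {V : Type*} [NormedAddCommGroup V] [NormedSpace ℝ V] [FiniteDimensional ℝ V]

lemma ae_ne_pair (a b : ℝ) : ∀ᵐ u ∂(volume : Measure ℝ), u ≠ a ∧ u ≠ b := by
  have h : (volume : Measure ℝ) ({a, b} : Set ℝ) = 0 :=
    Set.Countable.measure_zero ((Set.countable_singleton b).insert a) _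
  have := measure_eq_zero_iff_ae_notMem.mp h
  filter_upwards [this] with u hu
  simp only [Set.mem_insert_iff, Set.mem_singleton_iff] at hu
  push_neg at hu
  exact hu


lemma memLp_indicator_cont {f : ℝ → V} (hf : Continuous f) (a b : ℝ) :
    MemLp ((Icc a b).indicator f) 2 (volume : Measure ℝ) := by
  obtain ⟨C, hC⟩ := isCompact_Icc.exists_bound_of_continuousOn (f := f)
    (s := Icc a b) hf.continuousOn
  refine MemLp.of_le
    (memLp_indicator_const (s := Icc a b) 2 measurableSet_Icc (max C 0) (Or.inr measure_Icc_lt_top.ne))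
    ((hf.stronglyMeasurable.indicator measurableSet_Icc).aestronglyMeasurable)
    (ae_of_all _ fun u => ?_)
  by_cases h : u ∈ Icc a b
  · simp only [Set.indicator_of_mem h]
    rw [Real.norm_of_nonneg (le_max_right C 0)]
    exact (hC u h).trans (le_max_left _ _)
  · simp [Set.indicator_of_notMem h]

lemma sm_indicator_cont {f : ℝ → V} (hf : Continuous f) (a b : ℝ) :
    StronglyMeasurable ((Icc a b).indicator f) :=
  hf.stronglyMeasurable.indicator measurableSet_Icc

 variable (T : V →L[ℝ] V)

variable {V : Type*} [NormedAddCommGroup V] [NormedSpace ℝ V] [FiniteDimensional ℝ V]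
variable (T : V →L[ℝ] V)

lemma cont_expT : Continuous fun t : ℝ => NormedSpace.exp (t • T) :=
  (continuous_iff_continuousAt.2 fun x => (exp_analytic (𝕂 := ℝ) x).continuousAt).comp (continuous_id.smul continuous_const)

lemma cont_expT_apply (v : V) : Continuous fun t : ℝ => NormedSpace.exp (t • T) v :=
  (ContinuousLinearMap.apply ℝ V v).continuous.comp (cont_expT T)

lemma exp_bound_exists (M : ℝ) :
    ∃ C : ℝ, 0 ≤ C ∧ ∀ τ ∈ Icc (-M) M, ‖NormedSpace.exp (τ • T)‖ ≤ C := by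
  obtain ⟨C, hC⟩ := isCompact_Icc.exists_bound_of_continuousOn
    (f := fun τ : ℝ => NormedSpace.exp (τ • T)) (cont_expT T).continuousOn
  exact ⟨max C 0, le_max_right _ _, fun τ hτ => (hC τ hτ).trans (le_max_left _ _)⟩


noncomputable def Ffun (t : ℝ) (v : V) : ℝ → V :=
  (Icc (0:ℝ) t).indicator fun s => NormedSpace.exp ((t - s) • T) v

noncomputable def Gfun (t : ℝ) (v : V) : ℝ → V :=
  (Icc (0:ℝ) t).indicator fun s => NormedSpace.exp ((t - s) • T) v - v

lemma cont_inner (t : ℝ) (v : V) :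
    Continuous fun s : ℝ => NormedSpace.exp ((t - s) • T) v :=
  (cont_expT_apply T v).comp (continuous_const.sub continuous_id)

-- pointwise convergence of Ffun in t
lemma tendsto_Ffun_ptwise (t₀ u : ℝ) (hu0 : u ≠ 0) (hut : u ≠ t₀) (v : V) :
    Tendsto (fun t => Ffun T t v u) (𝓝 t₀) (𝓝 (Ffun T t₀ v u)) := by
  by_cases hu : 0 ≤ u
  · rcases lt_or_gt_of_ne hut with h | h
    · -- u < t₀
      have h2 : Ffun T t₀ v u = NormedSpace.exp ((t₀ - u) • T) v := by
        simp only [Ffun]; exact Set.indicator_of_mem (mem_Icc.mpr ⟨hu, h.le⟩) _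
      rw [h2]
      refine Tendsto.congr' ?_
        (((cont_expT_apply T v).comp (continuous_id.sub continuous_const)).tendsto t₀)
      filter_upwards [Ioi_mem_nhds h] with t ht
      show NormedSpace.exp ((t - u) • T) v = Ffun T t v u
      simp only [Ffun]
      rw [Set.indicator_of_mem (mem_Icc.mpr ⟨hu, le_of_lt ht⟩)]
    · -- t₀ < u
      have h2 : Ffun T t₀ v u = 0 := by
        simp only [Ffun]; exact Set.indicator_of_notMem (fun hm => absurd hm.2 h.not_ge) _
      rw [h2]
      refine Tendsto.congr' ?_ tendsto_const_nhds
      filter_upwards [Iio_mem_nhds h] with t ht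
      show (0:V) = Ffun T t v u
      simp only [Ffun]
      rw [Set.indicator_of_notMem (fun hm => absurd (mem_Icc.mp hm).2 ht.not_ge)]
  · have hz : ∀ t : ℝ, Ffun T t v u = 0 := fun t => by
      simp only [Ffun]; exact Set.indicator_of_notMem (fun hm => hu hm.1) _
    simp only [hz]
    exact tendsto_const_nhds

-- pointwise derivative of Gfun in t
lemma hasDeriv_Gfun_ptwise (t u : ℝ) (hu0 : u ≠ 0) (hut : u ≠ t) (v : V) :
    HasDerivAt (fun y => Gfun T y v u) (Ffun T t (T v) u) t := by
  by_cases hu : 0 ≤ u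
  · rcases lt_or_gt_of_ne hut with h | h
    · -- u < t : differentiable branch
      have hF : Ffun T t (T v) u = NormedSpace.exp ((t - u) • T) (T v) := by
        simp only [Ffun]; exact Set.indicator_of_mem (mem_Icc.mpr ⟨hu, h.le⟩) _
      have h1 : HasDerivAt (fun y : ℝ => NormedSpace.exp ((y - u) • T))
          (NormedSpace.exp ((t - u) • T) * T) t := by
        have hexp := hasDerivAt_exp_smul_const (𝕂 := ℝ) T (t - u)
        have hid : HasDerivAt (fun y : ℝ => y - u) 1 t := (hasDerivAt_id t).sub_const u
        have := hexp.scomp t hid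
        rw [one_smul] at this; exact this
      have h2 : HasDerivAt (fun y : ℝ => NormedSpace.exp ((y - u) • T) v)
          (NormedSpace.exp ((t - u) • T) (T v)) t := by
        have := h1.clm_apply (hasDerivAt_const t v)
        simpa [ContinuousLinearMap.mul_apply] using this
      have h3 := h2.sub_const v
      rw [hF]
      refine h3.congr_of_eventuallyEq ?_
      filter_upwards [Ioi_mem_nhds h] with y hy
      simp only [Gfun]
      exact Set.indicator_of_mem (mem_Icc.mpr ⟨hu, le_of_lt hy⟩) _
    · -- t < u : locally zero
      have hF : Ffun T t (T v) u = 0 := by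
        simp only [Ffun]; exact Set.indicator_of_notMem (fun hm => absurd hm.2 h.not_ge) _
      rw [hF]
      refine (hasDerivAt_const t (0:V)).congr_of_eventuallyEq ?_
      filter_upwards [Iio_mem_nhds h] with y hy
      simp only [Gfun]
      exact Set.indicator_of_notMem (fun hm => absurd hm.2 hy.not_ge) _
  · have hz : ∀ y : ℝ, Gfun T y v u = 0 := fun y => by
      simp only [Gfun]; exact Set.indicator_of_notMem (fun hm => hu hm.1) _
    have hF : Ffun T t (T v) u = 0 := by
      simp only [Ffun]; exact Set.indicator_of_notMem (fun hm => hu hm.1) _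
    rw [hF]
    refine (hasDerivAt_const t (0:V)).congr_of_eventuallyEq ?_
    exact Eventually.of_forall fun y => hz y

-- uniform Lipschitz bound for Gfun
lemma Gfun_lip (v : V) (M C : ℝ) (hC0 : 0 ≤ C)
    (hC : ∀ τ ∈ Icc (0:ℝ) M, ‖NormedSpace.exp (τ • T) (T v)‖ ≤ C)
    {t' t u : ℝ} (htt : t' ≤ t) (htM : t ≤ M) :
    ‖Gfun T t v u - Gfun T t' v u‖ ≤ (Icc (0:ℝ) M).indicator (fun _ => C) u * (t - t') := by
  have key : ∀ a ∈ Icc (0:ℝ) M, ∀ b ∈ Icc (0:ℝ) M,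
      ‖(NormedSpace.exp (b • T) v - v) - (NormedSpace.exp (a • T) v - v)‖ ≤ C * |b - a| := by
    intro a ha b hb
    have hd : ∀ x ∈ Icc (0:ℝ) M, HasDerivWithinAt
        (fun τ : ℝ => NormedSpace.exp (τ • T) v - v)
        (NormedSpace.exp (x • T) (T v)) (Icc (0:ℝ) M) x := by
      intro x _
      have hexp := hasDerivAt_exp_smul_const (𝕂 := ℝ) T x
      have h2 : HasDerivAt (fun τ : ℝ => NormedSpace.exp (τ • T) v)
          (NormedSpace.exp (x • T) (T v)) x := by
        have := hexp.clm_apply (hasDerivAt_const x v)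
        simpa [ContinuousLinearMap.mul_apply] using this
      exact (h2.sub_const v).hasDerivWithinAt
    have := Convex.norm_image_sub_le_of_norm_hasDerivWithin_le hd hC (convex_Icc _ _) ha hb
    simpa [Real.norm_eq_abs] using this
  by_cases hu : u ∈ Icc (0:ℝ) M
  · rw [Set.indicator_of_mem hu]
    by_cases h1 : u ∈ Icc (0:ℝ) t'
    · have h2 : u ∈ Icc (0:ℝ) t := ⟨h1.1, h1.2.trans htt⟩
      rw [Gfun, Gfun, Set.indicator_of_mem h2, Set.indicator_of_mem h1]
      have ha : t' - u ∈ Icc (0:ℝ) M := ⟨by linarith [h1.2], by linarith [hu.1]⟩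
      have hb : t - u ∈ Icc (0:ℝ) M := ⟨by linarith [h1.2, htt], by linarith [hu.1]⟩
      have hk := key _ ha _ hb
      have habs : |t - u - (t' - u)| = t - t' := by
        rw [show t - u - (t' - u) = t - t' by ring]
        exact abs_of_nonneg (by linarith)
      rw [habs] at hk
      simpa using hk
    · by_cases h2 : u ∈ Icc (0:ℝ) t
      · -- t' < u ≤ t
        have hu' : t' < u := by
          by_contra hle
          push_neg at hle
          exact h1 ⟨h2.1, hle⟩
        rw [Gfun, Gfun, Set.indicator_of_mem h2, Set.indicator_of_notMem h1]
        have ha : (0:ℝ) ∈ Icc (0:ℝ) M := ⟨le_refl _, by linarith [hu.1, hu.2]⟩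
        have hb : t - u ∈ Icc (0:ℝ) M := ⟨by linarith [h2.2], by linarith [h2.1]⟩
        have hk := key _ ha _ hb
        simp only [zero_smul, NormedSpace.exp_zero, ContinuousLinearMap.one_apply, sub_self,
          sub_zero] at hk
        rw [sub_zero]
        have habs : |t - u| = t - u := abs_of_nonneg (by linarith [h2.2])
        rw [habs] at hk
        refine hk.trans (mul_le_mul_of_nonneg_left (by linarith) hC0)
      · rw [Gfun, Gfun, Set.indicator_of_notMem h2, Set.indicator_of_notMem h1]
        simp only [sub_self, norm_zero]
        have : 0 ≤ t - t' := by linarith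
        positivity
  · rw [Set.indicator_of_notMem hu, zero_mul]
    have h2 : u ∉ Icc (0:ℝ) t := fun hm => hu ⟨hm.1, hm.2.trans htM⟩
    have h1 : u ∉ Icc (0:ℝ) t' := fun hm => hu ⟨hm.1, (hm.2.trans htt).trans htM⟩
    rw [Gfun, Gfun, Set.indicator_of_notMem h2, Set.indicator_of_notMem h1]
    simp



lemma memF (t : ℝ) (v : V) : MemLp (Ffun T t v) 2 (volume : Measure ℝ) :=
  memLp_indicator_cont (cont_inner T t v) 0 t

lemma smF (t : ℝ) (v : V) : StronglyMeasurable (Ffun T t v) :=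
  sm_indicator_cont (cont_inner T t v) 0 t

lemma memG (t : ℝ) (v : V) : MemLp (Gfun T t v) 2 (volume : Measure ℝ) :=
  memLp_indicator_cont ((cont_inner T t v).sub continuous_const) 0 t

lemma smG (t : ℝ) (v : V) : StronglyMeasurable (Gfun T t v) :=
  sm_indicator_cont ((cont_inner T t v).sub continuous_const) 0 t

noncomputable def LmFun (t : ℝ) (v : V) : Lp V 2 (volume : Measure ℝ) :=
  (memF T t v).toLp _

lemma LmFun_add (t : ℝ) (v w : V) :
    LmFun T t (v + w) = LmFun T t v + LmFun T t w := by
  have h : Ffun T t (v + w) = Ffun T t v + Ffun T t w := by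
    funext u
    simp only [Ffun, Pi.add_apply]
    by_cases hm : u ∈ Icc (0:ℝ) t
    · simp [Set.indicator_of_mem hm]
    · simp [Set.indicator_of_notMem hm]
  unfold LmFun
  rw [show (memF T t (v+w)).toLp _ = ((memF T t v).add (memF T t w)).toLp _ from
    MemLp.toLp_congr _ _ (by rw [h])]
  exact MemLp.toLp_add _ _

lemma LmFun_smul (t : ℝ) (c : ℝ) (v : V) :
    LmFun T t (c • v) = c • LmFun T t v := by
  have h : Ffun T t (c • v) = c • Ffun T t v := by
    funext u
    simp only [Ffun, Pi.smul_apply]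
    by_cases hm : u ∈ Icc (0:ℝ) t
    · simp [Set.indicator_of_mem hm]
    · simp [Set.indicator_of_notMem hm]
  unfold LmFun
  rw [show (memF T t (c • v)).toLp _ = ((memF T t v).const_smul c).toLp _ from
    MemLp.toLp_congr _ _ (by rw [h])]
  exact MemLp.toLp_const_smul _ _

noncomputable def Lm (t : ℝ) : V →L[ℝ] Lp V 2 (volume : Measure ℝ) :=
  LinearMap.toContinuousLinearMap
  { toFun := LmFun T t
    map_add' := LmFun_add T t
    map_smul' := LmFun_smul T t }

lemma Lm_apply (t : ℝ) (v : V) : Lm T t v = (memF T t v).toLp _ := rfl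

noncomputable def Rlp (t : ℝ) (v : V) : Lp V 2 (volume : Measure ℝ) :=
  (memG T t v).toLp _

lemma cont_Lm_apply (v : V) : Continuous fun t : ℝ => Lm T t v := by
  rw [continuous_iff_continuousAt]
  intro t₀
  obtain ⟨C, hC0, hC⟩ := exp_bound_exists T (|t₀| + 1)
  have habs : t₀ + 1 ≤ |t₀| + 1 := by have := le_abs_self t₀; linarith
  have hmain := tendsto_toLp_of_dominated (l := 𝓝 t₀)
    (Fn := fun t => Ffun T t v) (G := Ffun T t₀ v)
    (bound := (Icc (0:ℝ) (|t₀|+1)).indicator fun _ => C * ‖v‖)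
    (fun t => smF T t v) (smF T t₀ v) (fun t => memF T t v) (memF T t₀ v)
    (memLp_indicator_const (s := Icc (0:ℝ) (|t₀|+1)) 2 measurableSet_Icc _
      (Or.inr measure_Icc_lt_top.ne))
    ?_ ?_
  · exact hmain
  · have h1 : Icc (t₀-1) (t₀+1) ∈ 𝓝 t₀ := Icc_mem_nhds (by linarith) (by linarith)
    filter_upwards [h1] with t ht
    intro u
    by_cases hm : u ∈ Icc (0:ℝ) t
    · have hu1 : u ∈ Icc (0:ℝ) (|t₀|+1) :=
        mem_Icc.mpr ⟨hm.1, hm.2.trans (ht.2.trans habs)⟩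
      simp only [Ffun]
      rw [Set.indicator_of_mem hm, Set.indicator_of_mem hu1]
      calc ‖NormedSpace.exp ((t - u) • T) v‖
          ≤ ‖NormedSpace.exp ((t - u) • T)‖ * ‖v‖ := ContinuousLinearMap.le_opNorm _ _
        _ ≤ C * ‖v‖ := by
            refine mul_le_mul_of_nonneg_right (hC _ (mem_Icc.mpr ⟨?_, ?_⟩)) (norm_nonneg v)
            · have := hm.2; have := hm.1; linarith [abs_nonneg t₀]
            · have := hm.1; have := ht.2; linarith
    · simp only [Ffun]
      rw [Set.indicator_of_notMem hm]
      simp only [norm_zero]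
      exact Set.indicator_nonneg (fun _ _ => by positivity) u
  · filter_upwards [ae_ne_pair 0 t₀] with u hu
    exact tendsto_Ffun_ptwise T t₀ u hu.1 hu.2 v

lemma hasDeriv_Rlp (t : ℝ) (v : V) :
    HasDerivAt (fun y => Rlp T y v) (Lm T t (T v)) t := by
  rw [hasDerivAt_iff_tendsto_slope]
  set M := |t| + 1 with hM
  have habs : t + 1 ≤ |t| + 1 := by have := le_abs_self t; linarith
  obtain ⟨C, hC0, hC⟩ := exp_bound_exists T M
  set D := C * ‖T v‖ with hD
  have hD0 : 0 ≤ D := mul_nonneg hC0 (norm_nonneg _)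
  have hCv : ∀ τ ∈ Icc (0:ℝ) M, ‖NormedSpace.exp (τ • T) (T v)‖ ≤ D := by
    intro τ hτ
    calc ‖NormedSpace.exp (τ • T) (T v)‖ ≤ ‖NormedSpace.exp (τ • T)‖ * ‖T v‖ :=
          ContinuousLinearMap.le_opNorm _ _
      _ ≤ D := mul_le_mul_of_nonneg_right
          (hC τ (mem_Icc.mpr ⟨by have := hτ.1; linarith [abs_nonneg t], hτ.2⟩))
          (norm_nonneg _)
  have hFmem : ∀ y : ℝ, MemLp (fun u => (y - t)⁻¹ • (Gfun T y v u - Gfun T t v u)) 2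
      (volume : Measure ℝ) := fun y => ((memG T y v).sub (memG T t v)).const_smul _
  have hmain := tendsto_toLp_of_dominated (l := 𝓝[≠] t)
    (Fn := fun y u => (y - t)⁻¹ • (Gfun T y v u - Gfun T t v u)) (G := Ffun T t (T v))
    (bound := (Icc (0:ℝ) M).indicator fun _ => D)
    (fun y => ((smG T y v).sub (smG T t v)).const_smul _) (smF T t (T v))
    hFmem (memF T t (T v))
    (memLp_indicator_const (s := Icc (0:ℝ) M) 2 measurableSet_Icc _
      (Or.inr measure_Icc_lt_top.ne))
    ?_ ?_
  · refine Tendsto.congr (fun y => ?_) hmain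
    have e1 : (hFmem y).toLp _ = (y - t)⁻¹ • (((memG T y v).sub (memG T t v)).toLp _) :=
      MemLp.toLp_const_smul _ _
    rw [slope_def_module]
    rw [e1, MemLp.toLp_sub]
    rfl
  · have h1 : Icc (t-1) (t+1) ∈ 𝓝 t := Icc_mem_nhds (by linarith) (by linarith)
    have h2 : ∀ᶠ y in 𝓝[≠] t, y ∈ Icc (t-1) (t+1) :=
      eventually_nhdsWithin_of_eventually_nhds (eventually_of_mem h1 fun y hy => hy)
    filter_upwards [h2] with y hy
    intro u
    have hdiff : ‖Gfun T y v u - Gfun T t v u‖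
        ≤ (Icc (0:ℝ) M).indicator (fun _ => D) u * |y - t| := by
      rcases le_total t y with h | h
      · have := Gfun_lip T v M D hD0 hCv (t' := t) (t := y) (u := u) h (hy.2.trans habs)
        rwa [abs_of_nonneg (by linarith)]
      · have := Gfun_lip T v M D hD0 hCv (t' := y) (t := t) (u := u) h (by have := le_abs_self t; simp only [hM]; linarith)
        rw [abs_of_nonpos (by linarith)]
        rw [← norm_neg]
        simpa [neg_sub] using this
    rw [norm_smul, norm_inv, Real.norm_eq_abs]
    calc |y - t|⁻¹ * ‖Gfun T y v u - Gfun T t v u‖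
        ≤ |y - t|⁻¹ * ((Icc (0:ℝ) M).indicator (fun _ => D) u * |y - t|) := by
          refine mul_le_mul_of_nonneg_left hdiff (by positivity)
      _ = (Icc (0:ℝ) M).indicator (fun _ => D) u * (|y - t| * |y - t|⁻¹) := by ring
      _ ≤ (Icc (0:ℝ) M).indicator (fun _ => D) u * 1 := by
          refine mul_le_mul_of_nonneg_left ?_
            (Set.indicator_nonneg (fun _ _ => hD0) u)
          rcases eq_or_ne y t with rfl | hne
          · simp
          · rw [mul_inv_cancel₀ (by simpa [sub_eq_zero] using hne)]
      _ = (Icc (0:ℝ) M).indicator (fun _ => D) u := mul_one _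
  · filter_upwards [ae_ne_pair 0 t] with u hu
    have hder := hasDeriv_Gfun_ptwise T t u hu.1 hu.2 v
    have := hasDerivAt_iff_tendsto_slope.mp hder
    refine Tendsto.congr (fun y => ?_) this
    rw [slope_def_module]

lemma hasDeriv_expT_apply (t : ℝ) (v : V) :
    HasDerivAt (fun y : ℝ => NormedSpace.exp (y • T) v)
      (NormedSpace.exp (t • T) (T v)) t := by
  have hexp := hasDerivAt_exp_smul_const (𝕂 := ℝ) T t
  have := hexp.clm_apply (hasDerivAt_const t v)
  simpa [ContinuousLinearMap.mul_apply] using this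

lemma Rlp_eq (t : ℝ) (v : V) :
    Rlp T t v = Lm T t v - indicatorConstLp 2 (measurableSet_Icc (a := (0:ℝ)) (b := t))
      measure_Icc_lt_top.ne v := by
  apply MeasureTheory.Lp.ext
  have hLm : ⇑(Lm T t v) = ⇑((memF T t v).toLp _) := rfl
  filter_upwards [MemLp.coeFn_toLp (memG T t v),
    MeasureTheory.Lp.coeFn_sub (Lm T t v)
      (indicatorConstLp 2 (measurableSet_Icc (a := (0:ℝ)) (b := t))
        measure_Icc_lt_top.ne v),
    MemLp.coeFn_toLp (memF T t v),
    indicatorConstLp_coeFn (p := 2) (hs := measurableSet_Icc (a := (0:ℝ)) (b := t))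
      (hμs := measure_Icc_lt_top.ne) (c := v)] with u h1 h2 h3 h4
  rw [Rlp] at *
  rw [h1, h2, Pi.sub_apply, h4, hLm, h3]
  simp only [Gfun, Ffun]
  by_cases hm : u ∈ Icc (0:ℝ) t
  · simp [Set.indicator_of_mem hm]
  · simp [Set.indicator_of_notMem hm]

lemma Rlp_zero (v : V) : Rlp T 0 v = 0 := by
  have h : Gfun T 0 v =ᵐ[volume] (0 : ℝ → V) := by
    filter_upwards [ae_ne_pair 0 0] with u hu
    simp only [Gfun]
    exact Set.indicator_of_notMem (fun hm => hu.1 (le_antisymm hm.2 hm.1)) _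
  rw [Rlp, MemLp.toLp_congr (memG T 0 v) MemLp.zero h]
  exact MemLp.toLp_zero _

lemma cont_clm_of_forall_apply {W : Type*} [NormedAddCommGroup W] [NormedSpace ℝ W]
    {A : ℝ → V →L[ℝ] W} (h : ∀ v, Continuous fun t => A t v) : Continuous A := by
  classical
  let hb := Module.Basis.ofVectorSpace ℝ V
  have hrepr : ∀ t, A t = ∑ i : Module.Basis.ofVectorSpaceIndex ℝ V,
      ((hb.coord i).toContinuousLinearMap).smulRight (A t (hb i)) := by
    intro t
    ext v
    simp only [ContinuousLinearMap.sum_apply, ContinuousLinearMap.smulRight_apply,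
      LinearMap.coe_toContinuousLinearMap', Module.Basis.coord_apply]
    conv_lhs => rw [← hb.sum_repr v]
    rw [map_sum]
    exact Finset.sum_congr rfl fun i _ => (A t).map_smul _ _
  have hcont : Continuous fun t => ∑ i : Module.Basis.ofVectorSpaceIndex ℝ V,
      ((hb.coord i).toContinuousLinearMap).smulRight (A t (hb i)) := by
    refine continuous_finset_sum _ fun i _ => ?_
    exact ((ContinuousLinearMap.smulRightL ℝ V W
      ((hb.coord i).toContinuousLinearMap)).continuous).comp (h (hb i))
  exact hcont.congr fun t => (hrepr t).symm

lemma cont_comp_right {W : Type*} [NormedAddCommGroup W] [NormedSpace ℝ W]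
    (T : V →L[ℝ] V) : Continuous fun A : V →L[ℝ] W => A.comp T :=
  ((ContinuousLinearMap.compL ℝ V V W).flip T).continuous

lemma intervalIntegral_clm_apply {W : Type*} [NormedAddCommGroup W] [NormedSpace ℝ W]
    [CompleteSpace W] {a b : ℝ} {φ : ℝ → V →L[ℝ] W}
    (h : IntervalIntegrable φ volume a b) (v : V) :
    (∫ s in a..b, φ s) v = ∫ s in a..b, φ s v := by
  rw [intervalIntegral, intervalIntegral, ContinuousLinearMap.sub_apply,
    ContinuousLinearMap.integral_apply h.1, ContinuousLinearMap.integral_apply h.2]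

end Proc
end GOU


open MeasureTheory


/-- The Grassmann Ornstein–Uhlenbeck process.  Given a Grassmann white
noise `Ξ` on `L²(ℝ; V)`, an initial condition `Ψ₀` compatible with it, and a drift matrix
`T`, the explicit formula `Ψ_t(v) = Ψ₀(e^{tT} v) + Ξ(1_{[0,t]} e^{(t−·)T} v)` defines the
unique continuous solution of the linear Grassmann SDE
`Ψ_t(v) = Ψ₀(v) + ∫₀ᵗ Ψ_s(Tv) ds + B_t(v)` with `B_t(v) = Ξ(1_{[0,t]} ⊗ v)`;
moreover each `Ψ_t` has square-zero values (so extends to an algebra homomorphism on `ΛV`). -/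
theorem stmt_5 {V : Type*} [NormedAddCommGroup V] [InnerProductSpace ℝ V]
    [FiniteDimensional ℝ V]
    {H : Type*} [NormedAddCommGroup H] [InnerProductSpace ℂ H] [CompleteSpace H]
    (T : V →L[ℝ] V)
    (Ξ : Lp V 2 (volume : Measure ℝ) →L[ℝ] (H →L[ℂ] H))
    (hΞ : ∀ f g : Lp V 2 (volume : Measure ℝ), Ξ f * Ξ g = -(Ξ g * Ξ f))
    (Ψ₀ : V →L[ℝ] (H →L[ℂ] H))
    (hΨ₀ : ∀ v w : V, Ψ₀ v * Ψ₀ w = -(Ψ₀ w * Ψ₀ v))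
    (hmix : ∀ (v : V) (f : Lp V 2 (volume : Measure ℝ)), Ψ₀ v * Ξ f = -(Ξ f * Ψ₀ v)) :
    -- the function `s ↦ 1_{[0,t]}(s) e^{(t−s)T} v` is square integrable …
    (∀ (t : ℝ) (v : V),
      MemLp ((Set.Icc (0 : ℝ) t).indicator fun s => NormedSpace.exp ((t - s) • T) v)
        2 (volume : Measure ℝ)) ∧
    -- … and the process `Ψ` it defines
    ∃ Ψ : ℝ → (V →L[ℝ] (H →L[ℂ] H)),
      (∀ (t : ℝ) (v : V)
        (h : MemLp ((Set.Icc (0 : ℝ) t).indicator fun s => NormedSpace.exp ((t - s) • T) v)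
          2 (volume : Measure ℝ)),
        Ψ t v = Ψ₀ (NormedSpace.exp (t • T) v) + Ξ (MemLp.toLp _ h)) ∧
      -- (a) square-zero values, hence Grassmann
      (∀ t : ℝ, 0 ≤ t → ∀ v : V, Ψ t v * Ψ t v = 0) ∧
      -- (b) continuity in operator norm
      ContinuousOn Ψ (Set.Ici 0) ∧
      -- (c) the integral equation
      (∀ t : ℝ, 0 ≤ t → ∀ v : V,
        Ψ t v = Ψ₀ v + (∫ s in (0 : ℝ)..t, Ψ s (T v)) +
          Ξ (indicatorConstLp 2 (measurableSet_Icc (a := (0:ℝ)) (b := t))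
              measure_Icc_lt_top.ne v)) ∧
      -- (d) uniqueness among continuous solutions
      (∀ Ψ' : ℝ → (V →L[ℝ] (H →L[ℂ] H)), ContinuousOn Ψ' (Set.Ici 0) →
        (∀ t : ℝ, 0 ≤ t → ∀ v : V,
          Ψ' t v = Ψ₀ v + (∫ s in (0 : ℝ)..t, Ψ' s (T v)) +
            Ξ (indicatorConstLp 2 (measurableSet_Icc (a := (0:ℝ)) (b := t))
                measure_Icc_lt_top.ne v)) →
        ∀ t : ℝ, 0 ≤ t → Ψ' t = Ψ t) := by
  classical
  refine ⟨fun t v => GOU.memF T t v, ?_⟩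
  set Ψ : ℝ → (V →L[ℝ] (H →L[ℂ] H)) :=
    fun t => Ψ₀.comp (NormedSpace.exp (t • T)) + Ξ.comp (GOU.Lm T t) with hΨdef
  have hΨapp : ∀ (t : ℝ) (v : V),
      Ψ t v = Ψ₀ (NormedSpace.exp (t • T) v) + Ξ (GOU.Lm T t v) := fun t v => rfl
  have hcontpt : ∀ v : V, Continuous fun t => Ψ t v := by
    intro v
    simp only [hΨapp]
    exact ((Ψ₀.continuous).comp (GOU.cont_expT_apply T v)).add
      ((Ξ.continuous).comp (GOU.cont_Lm_apply T v))
  have hcont : Continuous Ψ := GOU.cont_clm_of_forall_apply hcontpt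
  -- the integral equation, for every t
  have hceq : ∀ (t : ℝ) (v : V),
      Ψ t v = Ψ₀ v + (∫ s in (0 : ℝ)..t, Ψ s (T v)) +
        Ξ (indicatorConstLp 2 (measurableSet_Icc (a := (0:ℝ)) (b := t))
            measure_Icc_lt_top.ne v) := by
    intro t v
    set φ : ℝ → (H →L[ℂ] H) := fun s => Ψ s (T v) with hφ
    have hφcont : Continuous φ := hcontpt (T v)
    set Wf : ℝ → (H →L[ℂ] H) :=
      fun y => Ψ₀ (NormedSpace.exp (y • T) v) + Ξ (GOU.Rlp T y v) with hWf
    set Yf : ℝ → (H →L[ℂ] H) := fun y => Ψ₀ v + ∫ s in (0:ℝ)..y, φ s with hYf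
    have hWder : ∀ y : ℝ, HasDerivAt Wf (φ y) y := by
      intro y
      have h1 : HasDerivAt (fun y : ℝ => Ψ₀ (NormedSpace.exp (y • T) v))
          (Ψ₀ (NormedSpace.exp (y • T) (T v))) y := by
        have := (hasDerivAt_const y Ψ₀).clm_apply (GOU.hasDeriv_expT_apply T y v)
        simpa using this
      have h2 : HasDerivAt (fun y : ℝ => Ξ (GOU.Rlp T y v)) (Ξ (GOU.Lm T y (T v))) y := by
        have := (hasDerivAt_const y Ξ).clm_apply (GOU.hasDeriv_Rlp T y v)
        simpa using this
      have h3 := h1.add h2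
      have h4 : φ y = Ψ₀ (NormedSpace.exp (y • T) (T v)) + Ξ (GOU.Lm T y (T v)) :=
        hΨapp y (T v)
      rw [hWf, h4]
      exact h3
    have hYder : ∀ y : ℝ, HasDerivAt Yf (φ y) y := by
      intro y
      exact ((hφcont.integral_hasStrictDerivAt 0 y).hasDerivAt).const_add (Ψ₀ v)
    have hWY : ∀ y : ℝ, Wf y = Yf y := by
      have hdiff : ∀ y : ℝ, HasDerivAt (fun z => Wf z - Yf z) 0 y := by
        intro y
        have := (hWder y).sub (hYder y); rw [sub_self] at this; exact this
      have hconst : ∀ y : ℝ, Wf y - Yf y = Wf 0 - Yf 0 :=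
        fun y => is_const_of_deriv_eq_zero
          (fun z => (hdiff z).differentiableAt) (fun z => (hdiff z).deriv) y 0
      have hW0 : Wf 0 = Ψ₀ v := by
        rw [hWf]
        simp [GOU.Rlp_zero, NormedSpace.exp_zero]
      have hY0 : Yf 0 = Ψ₀ v := by
        rw [hYf]
        simp
      intro y
      have := hconst y
      rw [hW0, hY0, sub_self, sub_eq_zero] at this
      exact this
    have hsplit : Ψ t v = Wf t +
        Ξ (indicatorConstLp 2 (measurableSet_Icc (a := (0:ℝ)) (b := t))
            measure_Icc_lt_top.ne v) := by
      have hR := GOU.Rlp_eq T t v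
      have hΞR : Ξ (GOU.Lm T t v) = Ξ (GOU.Rlp T t v) +
          Ξ (indicatorConstLp 2 (measurableSet_Icc (a := (0:ℝ)) (b := t))
            measure_Icc_lt_top.ne v) := by
        rw [hR, map_sub]
        abel
      rw [hΨapp, hΞR]
      show _ = (Ψ₀ (NormedSpace.exp (t • T) v) + Ξ (GOU.Rlp T t v)) + _
      abel
    rw [hsplit, hWY t]
  -- square zero
  have hsq : ∀ (t : ℝ) (v : V), Ψ t v * Ψ t v = 0 := by
    intro t v
    have key : ∀ x : H →L[ℂ] H, x = -x → x = 0 := by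
      intro x hx
      have h3 : x + x = 0 := by
        nth_rewrite 1 [hx]
        simp
      have h4 : (2:ℂ) • x = 0 := by rw [two_smul]; exact h3
      have h5 := congrArg (fun y => (2:ℂ)⁻¹ • y) h4
      simpa [smul_smul] using h5
    rw [hΨapp]
    set a := Ψ₀ (NormedSpace.exp (t • T) v) with ha
    set b := Ξ (GOU.Lm T t v) with hb
    have haa : a * a = 0 := key _ (by nth_rewrite 1 [hΨ₀ _ _]; simp; rfl)
    have hbb : b * b = 0 := key _ (by nth_rewrite 1 [hΞ _ _]; simp; rfl)
    have hab : a * b = -(b * a) := hmix _ _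
    rw [add_mul, mul_add, mul_add, haa, hbb, hab]
    abel
  refine ⟨Ψ, ?_, fun t _ v => hsq t v, hcont.continuousOn, fun t _ v => hceq t v, ?_⟩
  · intro t v h
    rw [hΨapp]
    rfl
  · -- uniqueness
    intro Ψ' hΨ'cont hΨ'eq t ht
    set Δ : ℝ → (V →L[ℝ] (H →L[ℂ] H)) := fun s => Ψ' s - Ψ s with hΔ
    have hΔcont : ContinuousOn Δ (Set.Ici 0) := hΨ'cont.sub hcont.continuousOn
    have happ : ∀ s : ℝ, 0 ≤ s → ∀ w : V, Δ s w = ∫ σ in (0:ℝ)..s, Δ σ (T w) := by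
      intro s hs w
      have hint1 : IntervalIntegrable (fun σ => Ψ' σ (T w)) volume 0 s := by
        apply ContinuousOn.intervalIntegrable
        refine ContinuousOn.mono (hΨ'cont.clm_apply continuousOn_const)
          (fun x hx => ?_)
        rw [Set.uIcc_of_le hs] at hx
        exact hx.1
      have hint2 : IntervalIntegrable (fun σ => Ψ σ (T w)) volume 0 s :=
        (hcontpt (T w)).intervalIntegrable 0 s
      have e1 := hΨ'eq s hs w
      have e2 := hceq s w
      simp only [hΔ, ContinuousLinearMap.sub_apply]
      rw [e1, e2, intervalIntegral.integral_sub hint1 hint2]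
      abel
    have hφTcont : ContinuousOn (fun σ => (Δ σ).comp T) (Set.Ici 0) :=
      (GOU.cont_comp_right T).comp_continuousOn hΔcont
    have hop : ∀ s : ℝ, 0 ≤ s → Δ s = ∫ σ in (0:ℝ)..s, (Δ σ).comp T := by
      intro s hs
      have hint : IntervalIntegrable (fun σ => (Δ σ).comp T) volume 0 s := by
        apply ContinuousOn.intervalIntegrable
        refine hφTcont.mono (fun x hx => ?_)
        rw [Set.uIcc_of_le hs] at hx
        exact hx.1
      refine ContinuousLinearMap.ext fun w => ?_
      rw [GOU.intervalIntegral_clm_apply hint w]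
      exact happ s hs w
    have hΔ0 : Δ 0 = 0 := by
      rw [hop 0 le_rfl, intervalIntegral.integral_same]
    have hder : ∀ x ∈ Set.Ico (0:ℝ) t, HasDerivWithinAt Δ ((Δ x).comp T) (Set.Ici x) x := by
      intro x hx
      have hint : IntervalIntegrable (fun σ => (Δ σ).comp T) volume 0 x := by
        apply ContinuousOn.intervalIntegrable
        refine hφTcont.mono (fun z hz => ?_)
        rw [Set.uIcc_of_le hx.1] at hz
        exact hz.1
      haveI : SecondCountableTopologyEither ℝ (V →L[ℝ] (H →L[ℂ] H)) :=
        ⟨Or.inl inferInstance⟩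
      have hmeas : StronglyMeasurableAtFilter (fun σ => (Δ σ).comp T) (𝓝[>] x) := by
        refine ⟨Set.Ici 0, ?_, hφTcont.aestronglyMeasurable measurableSet_Ici⟩
        exact Filter.mem_of_superset self_mem_nhdsWithin
          (fun z hz => le_trans hx.1 (le_of_lt hz))
      have hcw : ContinuousWithinAt (fun σ => (Δ σ).comp T) (Set.Ioi x) x :=
        ((hφTcont x hx.1).mono (fun z hz => le_trans hx.1 (le_of_lt hz)))
      have hg : HasDerivWithinAt (fun y => ∫ σ in (0:ℝ)..y, (Δ σ).comp T)
          ((Δ x).comp T) (Set.Ici x) x :=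
        intervalIntegral.integral_hasDerivWithinAt_right hint hmeas hcw
      refine hg.congr (fun y hy => ?_) (hop x hx.1)
      exact hop y (le_trans hx.1 hy)
    have hbound : ∀ x ∈ Set.Ico (0:ℝ) t, ‖(Δ x).comp T‖ ≤ ‖T‖ * ‖Δ x‖ + 0 := by
      intro x _
      rw [add_zero, mul_comm]
      exact ContinuousLinearMap.opNorm_comp_le _ _
    have hgron := norm_le_gronwallBound_of_norm_deriv_right_le (δ := 0) (K := ‖T‖) (ε := 0)
      (hΔcont.mono (fun z hz => hz.1)) hder (by rw [hΔ0]; simp) hbound t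
      (Set.mem_Icc.mpr ⟨ht, le_rfl⟩)
    rw [gronwallBound_ε0] at hgron
    simp only [zero_mul] at hgron
    have : Δ t = 0 := norm_le_zero_iff.mp hgron
    have h2 : Ψ' t - Ψ t = 0 := this
    exact sub_eq_zero.mp h2
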